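/- arXiv:math/0608067 — 2 statements merged into one kernel-verified Lean document; each statement's English description precedes it below -/
import Mathlib

section
/- Fix λ ∈ R, p=(1,0,0,0), and for θ ∈ [0,2π] let γ_θ be the geodesic of curvature λ with γ_θ(0)=p and γ_θ'(0)=cos(θ)E1(p)+sin(θ)E2(p). Then all geodesics γ_θ meet at the common point γ_θ(π/√(1+λ²)) = −cos(λπ/√(1+λ²))·p + sin(λπ/√(1+λ²))·V(p), independent of θ. -/
open Real
open scoped RealInnerProductSpace

def qi : Quaternion ℝ := ⟨0, 1, 0, 0⟩

lemma qi_sq : qi * qi = -1 := by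
  ext <;> simp only [Quaternion.re_mul, Quaternion.imI_mul, Quaternion.imJ_mul, Quaternion.imK_mul, Quaternion.re_neg, Quaternion.imI_neg, Quaternion.imJ_neg, Quaternion.imK_neg, Quaternion.re_one, Quaternion.imI_one, Quaternion.imJ_one, Quaternion.imK_one] <;> simp [qi]

lemma qi_qi (x : Quaternion ℝ) : qi * (qi * x) = -x := by
  rw [← mul_assoc, qi_sq, neg_one_mul]

noncomputable def ee (μ s : ℝ) : Quaternion ℝ :=
  (Real.cos (μ * s)) • 1 + (Real.sin (μ * s)) • qi

lemma ee_zero (μ : ℝ) : ee μ 0 = 1 := by simp [ee]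

lemma qi_comm_ee (μ s : ℝ) : ee μ s * qi = qi * ee μ s := by
  simp [ee, add_mul, mul_add, smul_mul_assoc, mul_smul_comm]

lemma qi_comm_ee' (μ s : ℝ) (x : Quaternion ℝ) :
    ee μ s * (qi * x) = qi * (ee μ s * x) := by
  rw [← mul_assoc, qi_comm_ee, mul_assoc]

lemma ee_mul (μ ν s : ℝ) : ee μ s * ee ν s = ee (μ + ν) s := by
  simp only [ee, add_mul, mul_add, smul_mul_assoc, mul_smul_comm, smul_smul, one_mul,
    mul_one, qi_sq, Real.cos_add, Real.sin_add]
  module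

lemma ee_inv (μ s : ℝ) : ee μ s * ee (-μ) s = 1 := by
  rw [ee_mul]; simp [ee]

lemma hasDerivAt_ee (μ s : ℝ) : HasDerivAt (ee μ) (μ • (qi * ee μ s)) s := by
  have h1 : HasDerivAt (fun s : ℝ => μ * s) μ s := by
    simpa using (hasDerivAt_id s).const_mul μ
  have hc := (Real.hasDerivAt_cos (μ * s)).comp s h1
  have hs := (Real.hasDerivAt_sin (μ * s)).comp s h1
  have := (hc.smul_const (1 : Quaternion ℝ)).add (hs.smul_const qi)
  refine this.congr_deriv ?_
  simp only [ee, mul_add, mul_smul_comm, mul_one, qi_sq]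
  module

lemma const_of_hasDerivAt_zero {f : ℝ → Quaternion ℝ}
    (h : ∀ s, HasDerivAt f 0 s) (s : ℝ) : f s = f 0 :=
  is_const_of_deriv_eq_zero (fun x => (h x).differentiableAt)
    (fun x => (h x).deriv) s 0

/-- All the geodesics `γ_θ` of curvature `λ` leaving from `p = (1,0,0,0)` with
initial velocity `cos(θ)E1(p) + sin(θ)E2(p) = (0,0,cos θ,sin θ)` meet again at
the common point
`γ_θ(π/√(1+λ²)) = −cos(λπ/√(1+λ²))·p + sin(λπ/√(1+λ²))·V(p)`,
independent of `θ`. -/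
theorem geodesics_meet_at_pole (lam θ : ℝ) (γ γ' γ'' : ℝ → Quaternion ℝ)
    (hγ0 : γ 0 = 1)
    (hγ'0 : γ' 0 = ⟨0, 0, Real.cos θ, Real.sin θ⟩)
    (hd1 : ∀ s, HasDerivAt γ (γ' s) s) (hd2 : ∀ s, HasDerivAt γ' (γ'' s) s)
    (heq : ∀ s, γ'' s + γ s + (2 * lam) • (qi * γ' s) = 0) :
    γ (π / Real.sqrt (1 + lam ^ 2)) =
      (-Real.cos (lam * π / Real.sqrt (1 + lam ^ 2))) • (1 : Quaternion ℝ)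
      + Real.sin (lam * π / Real.sqrt (1 + lam ^ 2)) • qi := by
  set ω := Real.sqrt (1 + lam ^ 2) with hωdef
  have hω2 : ω ^ 2 = 1 + lam ^ 2 := Real.sq_sqrt (by positivity)
  have hω0 : 0 < ω := Real.sqrt_pos.mpr (by positivity)
  set μp := ω - lam with hμp
  set μm := -ω - lam with hμm
  set u : ℝ → Quaternion ℝ := fun s => γ' s - μm • (qi * γ s) with hudef
  -- Step 1: u' = μp • (qi * u)
  have hu' : ∀ s, HasDerivAt u (μp • (qi * u s)) s := by
    intro s
    have h1 : HasDerivAt u (γ'' s - μm • (qi * γ' s)) s :=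
      (hd2 s).sub (((hd1 s).const_mul qi).const_smul μm)
    have h2 : γ'' s = -γ s - (2 * lam) • (qi * γ' s) := by
      have h3 : γ'' s + (γ s + (2 * lam) • (qi * γ' s)) = 0 := by
        rw [← add_assoc]; exact heq s
      rw [add_eq_zero_iff_eq_neg] at h3
      rw [h3]; abel
    have hval : γ'' s - μm • (qi * γ' s) = μp • (qi * u s) := by
      rw [h2]
      show _ = μp • (qi * (γ' s - μm • (qi * γ s)))
      simp only [mul_sub, mul_smul_comm, qi_qi, smul_neg]
      match_scalars
      · simp only [hμp, hμm]; linear_combination hω2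
      · simp only [hμp, hμm]; ring
    exact hval ▸ h1
  -- Step 2: u s = ee μp s * u 0
  have hw : ∀ s, HasDerivAt (fun s => ee (-μp) s * u s) 0 s := by
    intro s
    have h := (hasDerivAt_ee (-μp) s).mul (hu' s)
    have hval : (-μp) • (qi * ee (-μp) s) * u s + ee (-μp) s * (μp • (qi * u s)) = 0 := by
      simp only [smul_mul_assoc, mul_smul_comm, mul_assoc, qi_comm_ee']
      module
    exact hval ▸ h
  have hus : ∀ s, u s = ee μp s * u 0 := by
    intro s
    have h := const_of_hasDerivAt_zero hw s
    rw [ee_zero, one_mul] at h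
    calc u s = (ee μp s * ee (-μp) s) * u s := by rw [ee_inv, one_mul]
    _ = ee μp s * (ee (-μp) s * u s) := by rw [mul_assoc]
    _ = ee μp s * u 0 := by rw [h]
  -- Step 3: integrate
  set ψ : ℝ → Quaternion ℝ := fun s =>
    ((Real.sin (2 * ω * s) / (2 * ω)) • (1 : Quaternion ℝ)
      - (Real.cos (2 * ω * s) / (2 * ω)) • qi) * u 0 with hψdef
  have hne : (2 : ℝ) * ω ≠ 0 := by positivity
  have hψ' : ∀ s, HasDerivAt ψ (ee (2 * ω) s * u 0) s := by
    intro s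
    have h1 : HasDerivAt (fun s : ℝ => 2 * ω * s) (2 * ω) s := by
      simpa using (hasDerivAt_id s).const_mul (2 * ω)
    have hc := (Real.hasDerivAt_cos (2 * ω * s)).comp s h1
    have hs := (Real.hasDerivAt_sin (2 * ω * s)).comp s h1
    have h2 := (((hs.div_const (2 * ω)).smul_const (1 : Quaternion ℝ)).sub
      ((hc.div_const (2 * ω)).smul_const qi)).mul_const (u 0)
    refine h2.congr_deriv ?_
    congr 1
    rw [ee]
    match_scalars
    · field_simp
    · field_simp
  have hφ' : ∀ s, HasDerivAt (fun s => ee (-μm) s * γ s) (ee (2 * ω) s * u 0) s := by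
    intro s
    have h := (hasDerivAt_ee (-μm) s).mul (hd1 s)
    have h1 : (-μm) • (qi * ee (-μm) s) * γ s + ee (-μm) s * γ' s
        = ee (-μm) s * u s := by
      show _ = ee (-μm) s * (γ' s - μm • (qi * γ s))
      simp only [smul_mul_assoc, mul_smul_comm, mul_assoc, mul_sub, qi_comm_ee']
      module
    have h2 : ee (-μm) s * u s = ee (2 * ω) s * u 0 := by
      rw [hus, ← mul_assoc, ee_mul]
      congr 2
      simp only [hμp, hμm]; ring
    have hval := h1.trans h2
    exact hval ▸ h
  have hdiff : ∀ s, HasDerivAt (fun s => ee (-μm) s * γ s - ψ s) 0 s := by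
    intro s
    have h := (hφ' s).sub (hψ' s); rw [sub_self] at h; exact h
  set T := π / ω with hT
  have hconst := const_of_hasDerivAt_zero hdiff T
  have h2ωT : 2 * ω * T = 2 * π := by
    rw [hT]; field_simp
  have hψT : ψ T = ψ 0 := by
    rw [hψdef]
    simp [h2ωT, Real.sin_two_pi, Real.cos_two_pi]
  rw [hψT, ee_zero, hγ0, one_mul, sub_left_inj] at hconst
  -- hconst : ee (-μm) T * γ T = 1
  have hγT : γ T = ee μm T := by
    calc γ T = (ee μm T * ee (-μm) T) * γ T := by rw [ee_inv, one_mul]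
    _ = ee μm T * (ee (-μm) T * γ T) := by rw [mul_assoc]
    _ = ee μm T := by rw [hconst, mul_one]
  rw [hγT, ee]
  have harg : μm * T = -(π + lam * π / ω) := by
    rw [hμm, hT]; field_simp; ring
  rw [harg]
  simp [Real.cos_add, Real.sin_add]
end

section
/- With γ_θ the geodesic of curvature λ from p=(1,0,0,0) with initial velocity cos(θ)E1(p)+sin(θ)E2(p), the x1 and y1 coordinates of γ_θ(s) are independent of θ: x1(s)=cos(λs)cos(√(1+λ²)s)+(λ/√(1+λ²))sin(λs)sin(√(1+λ²)s) and y1(s)=−sin(λs)cos(√(1+λ²)s)+(λ/√(1+λ²))cos(λs)sin(√(1+λ²)s), while x2(θ,s)=sin(√(1+λ²)s)cos(θ−λs)/√(1+λ²) and y2(θ,s)=sin(√(1+λ²)s)sin(θ−λs)/√(1+λ²). -/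
open Real
open scoped RealInnerProductSpace

set_option maxHeartbeats 2000000

@[simp] lemma qi_re : qi.re = 0 := rfl
@[simp] lemma qi_imI : qi.imI = 1 := rfl
@[simp] lemma qi_imJ : qi.imJ = 0 := rfl
@[simp] lemma qi_imK : qi.imK = 0 := rfl

attribute [local simp] Quaternion.re_one Quaternion.imI_one Quaternion.imJ_one Quaternion.imK_one

/-- Coordinates of the geodesic `γ_θ` of curvature `λ` from `p = (1,0,0,0)` with
initial velocity `(0,0,cos θ,sin θ)`: the `x1,y1` coordinates are independent of
`θ`, `x1(s) = cos(λs)cos(√(1+λ²)s) + (λ/√(1+λ²))sin(λs)sin(√(1+λ²)s)`,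
`y1(s) = −sin(λs)cos(√(1+λ²)s) + (λ/√(1+λ²))cos(λs)sin(√(1+λ²)s)`, while
`x2(θ,s) = sin(√(1+λ²)s)cos(θ−λs)/√(1+λ²)` and
`y2(θ,s) = sin(√(1+λ²)s)sin(θ−λs)/√(1+λ²)`. -/
theorem geodesic_coordinates (lam θ : ℝ) (γ γ' γ'' : ℝ → Quaternion ℝ)
    (hγ0 : γ 0 = 1)
    (hγ'0 : γ' 0 = ⟨0, 0, Real.cos θ, Real.sin θ⟩)
    (hd1 : ∀ s, HasDerivAt γ (γ' s) s) (hd2 : ∀ s, HasDerivAt γ' (γ'' s) s)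
    (heq : ∀ s, γ'' s + γ s + (2 * lam) • (qi * γ' s) = 0) :
    ∀ s : ℝ,
      (γ s).re = Real.cos (lam * s) * Real.cos (Real.sqrt (1 + lam ^ 2) * s)
        + lam / Real.sqrt (1 + lam ^ 2) * Real.sin (lam * s)
          * Real.sin (Real.sqrt (1 + lam ^ 2) * s) ∧
      (γ s).imI = -Real.sin (lam * s) * Real.cos (Real.sqrt (1 + lam ^ 2) * s)
        + lam / Real.sqrt (1 + lam ^ 2) * Real.cos (lam * s)
          * Real.sin (Real.sqrt (1 + lam ^ 2) * s) ∧
      (γ s).imJ = Real.sin (Real.sqrt (1 + lam ^ 2) * s)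
          * Real.cos (θ - lam * s) / Real.sqrt (1 + lam ^ 2) ∧
      (γ s).imK = Real.sin (Real.sqrt (1 + lam ^ 2) * s)
          * Real.sin (θ - lam * s) / Real.sqrt (1 + lam ^ 2) := by
  set μ := Real.sqrt (1 + lam ^ 2) with hμdef
  have hμpos : 0 < μ := Real.sqrt_pos.2 (by positivity)
  have hμne : μ ≠ 0 := ne_of_gt hμpos
  have hμsq : μ ^ 2 = 1 + lam ^ 2 := Real.sq_sqrt (by positivity)
  have hii : qi * qi = -1 := by ext <;> simp [qi_re, qi_imI, qi_imJ, qi_imK]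
  set E : ℝ → Quaternion ℝ :=
    fun t => Real.cos (lam*t) • (1:Quaternion ℝ) + Real.sin (lam*t) • qi with hEdef
  have hcomm : ∀ t, qi * E t = E t * qi := by
    intro t; simp only [hEdef]; ext <;> simp [qi_re, qi_imI, qi_imJ, qi_imK] <;> ring
  have hlin : ∀ t : ℝ, HasDerivAt (fun t : ℝ => lam * t) lam t := fun t => by
    simpa using (hasDerivAt_id t).const_mul lam
  have hEderiv : ∀ t, HasDerivAt E (lam • (qi * E t)) t := by
    intro t
    have hc : HasDerivAt (fun t : ℝ => Real.cos (lam*t)) (-Real.sin (lam*t) * lam) t :=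
      (Real.hasDerivAt_cos (lam*t)).comp t (hlin t)
    have hs : HasDerivAt (fun t : ℝ => Real.sin (lam*t)) (Real.cos (lam*t) * lam) t :=
      (Real.hasDerivAt_sin (lam*t)).comp t (hlin t)
    have := (hc.smul_const (1:Quaternion ℝ)).add (hs.smul_const qi)
    refine this.congr_deriv (Eq.symm ?_)
    ext <;> simp [qi_re, qi_imI, qi_imJ, qi_imK, hEdef] <;> ring
  set U : ℝ → Quaternion ℝ := fun t => E t * γ t with hUdef
  set U' : ℝ → Quaternion ℝ := fun t => lam • (qi * U t) + E t * γ' t with hU'def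
  have hdU : ∀ t, HasDerivAt U (U' t) t := by
    intro t
    have := (hEderiv t).mul (hd1 t)
    refine this.congr_deriv (Eq.symm ?_)
    simp only [hUdef, hU'def]
    rw [smul_mul_assoc, mul_assoc]
  have hγ''eq : ∀ t, γ'' t = -γ t - (2*lam) • (qi * γ' t) := by
    intro t
    have := heq t
    linear_combination (norm := module) this
  have hdU' : ∀ t, HasDerivAt U' (-(1 + lam ^ 2) • U t) t := by
    intro t
    have h1 : HasDerivAt (fun t => lam • (qi * U t)) (lam • (qi * U' t)) t :=
      ((hdU t).const_mul qi).const_smul lam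
    have h2 : HasDerivAt (fun t => E t * γ' t)
        ((lam • (qi * E t)) * γ' t + E t * γ'' t) t := (hEderiv t).mul (hd2 t)
    have := h1.add h2
    refine this.congr_deriv (Eq.symm ?_)
    rw [hγ''eq t]
    simp only [hU'def, hUdef]
    have hEqq : ∀ u, E u * qi * qi = -E u := fun u => by rw [mul_assoc, hii, mul_neg_one]
    simp only [mul_add, mul_sub, mul_neg, mul_smul_comm, smul_mul_assoc, ← mul_assoc, hii,
      hcomm t, hEqq, neg_one_mul, neg_mul]
    module
  set Q0 : Quaternion ℝ := (⟨0, lam, Real.cos θ, Real.sin θ⟩ : Quaternion ℝ) with hQ0def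
  have hU0 : U 0 = 1 := by
    simp [hUdef, hEdef, hγ0]
  have hU'0 : U' 0 = Q0 := by
    have hg : (γ' 0).re = 0 ∧ (γ' 0).imI = 0 ∧ (γ' 0).imJ = Real.cos θ ∧ (γ' 0).imK = Real.sin θ := by
      rw [hγ'0]; exact ⟨rfl, rfl, rfl, rfl⟩
    simp only [hU'def, hU0, hEdef]
    ext <;> simp [qi_re, qi_imI, qi_imJ, qi_imK, hQ0def, hg]
  have hμlin : ∀ t : ℝ, HasDerivAt (fun t : ℝ => μ * t) μ t := fun t => by
    simpa using (hasDerivAt_id t).const_mul μ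
  set v1 : ℝ → Quaternion ℝ :=
    fun t => Real.cos (μ*t) • U t - (Real.sin (μ*t)/μ) • U' t with hv1def
  set v2 : ℝ → Quaternion ℝ :=
    fun t => Real.sin (μ*t) • U t + (Real.cos (μ*t)/μ) • U' t with hv2def
  have hdv1 : ∀ t, HasDerivAt v1 0 t := by
    intro t
    have hc : HasDerivAt (fun t : ℝ => Real.cos (μ*t)) (-Real.sin (μ*t) * μ) t :=
      (Real.hasDerivAt_cos (μ*t)).comp t (hμlin t)
    have hs : HasDerivAt (fun t : ℝ => Real.sin (μ*t)/μ) (Real.cos (μ*t) * μ / μ) t :=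
      ((Real.hasDerivAt_sin (μ*t)).comp t (hμlin t)).div_const μ
    have := (hc.smul (hdU t)).sub (hs.smul (hdU' t))
    refine this.congr_deriv (Eq.symm ?_)
    match_scalars
    all_goals try simp only [← hμsq]
    all_goals field_simp
    all_goals ring
  have hdv2 : ∀ t, HasDerivAt v2 0 t := by
    intro t
    have hs : HasDerivAt (fun t : ℝ => Real.sin (μ*t)) (Real.cos (μ*t) * μ) t :=
      (Real.hasDerivAt_sin (μ*t)).comp t (hμlin t)
    have hc : HasDerivAt (fun t : ℝ => Real.cos (μ*t)/μ) (-Real.sin (μ*t) * μ / μ) t :=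
      ((Real.hasDerivAt_cos (μ*t)).comp t (hμlin t)).div_const μ
    have := (hs.smul (hdU t)).add (hc.smul (hdU' t))
    refine this.congr_deriv (Eq.symm ?_)
    match_scalars
    all_goals try simp only [← hμsq]
    all_goals field_simp
    all_goals ring
  have hv1c : ∀ t, v1 t = v1 0 := by
    intro t
    exact is_const_of_deriv_eq_zero (fun x => (hdv1 x).differentiableAt)
      (fun x => (hdv1 x).deriv) t 0
  have hv2c : ∀ t, v2 t = v2 0 := by
    intro t
    exact is_const_of_deriv_eq_zero (fun x => (hdv2 x).differentiableAt)
      (fun x => (hdv2 x).deriv) t 0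
  have hUs : ∀ t, U t = Real.cos (μ*t) • (1:Quaternion ℝ) + (Real.sin (μ*t)/μ) • Q0 := by
    intro t
    have key : U t = Real.cos (μ*t) • v1 t + Real.sin (μ*t) • v2 t := by
      simp only [hv1def, hv2def, smul_sub, smul_add, smul_smul]
      match_scalars
      all_goals try ring
      all_goals nlinarith [Real.sin_sq_add_cos_sq (μ*t)]
    rw [key, hv1c t, hv2c t]
    simp only [hv1def, hv2def, hU0, hU'0]
    norm_num [smul_smul, div_eq_mul_inv]
  have hstarE : ∀ t, star (E t) * E t = 1 := by
    intro t
    simp only [hEdef]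
    ext <;> simp [qi_re, qi_imI, qi_imJ, qi_imK, Quaternion.re_star, Quaternion.imI_star, Quaternion.imJ_star,
      Quaternion.imK_star] <;> ring_nf <;>
      first
        | rw [← Real.sin_sq_add_cos_sq (lam*t)]; ring
        | skip
  have hγs : ∀ t, γ t = star (E t) * (Real.cos (μ*t) • (1:Quaternion ℝ) + (Real.sin (μ*t)/μ) • Q0) := by
    intro t
    rw [← hUs t]
    simp only [hUdef]
    rw [← mul_assoc, hstarE t, one_mul]
  have hQ : Q0.re = 0 ∧ Q0.imI = lam ∧ Q0.imJ = Real.cos θ ∧ Q0.imK = Real.sin θ :=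
    ⟨rfl, rfl, rfl, rfl⟩
  intro s
  rw [hγs s]
  refine ⟨?_, ?_, ?_, ?_⟩ <;>
    simp only [Quaternion.re_mul, Quaternion.imI_mul, Quaternion.imJ_mul, Quaternion.imK_mul,
      Quaternion.re_star, Quaternion.imI_star, Quaternion.imJ_star, Quaternion.imK_star,
      hEdef, hQ.1, hQ.2.1, hQ.2.2.1, hQ.2.2.2, qi_re, qi_imI, qi_imJ, qi_imK, Quaternion.re_add, Quaternion.imI_add, Quaternion.imJ_add,
      Quaternion.imK_add, Quaternion.re_smul, Quaternion.imI_smul, Quaternion.imJ_smul,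
      Quaternion.imK_smul, Quaternion.re_one, Quaternion.imI_one, Quaternion.imJ_one,
      Quaternion.imK_one, smul_eq_mul, Real.cos_sub, Real.sin_sub] <;>
    try ring
end
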